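/- For n ≥ 0, let p_n be the number of pairs (e,v) of words of length n over the alphabet {a,b,c,d} such that neither e nor v contains the factor cb (i.e., the letter c immediately followed by the letter b), the letter a occurs in e and in v in exactly the same set of positions, and the letter d occurs in e and in v in exactly the same set of positions. Then the generating function ∑_{n≥0} p_n x^n equals (1+x)/(1 − 5x + x² − x³). -/

import Mathlib

/-- `π` contains the pattern `σ`. -/
def Contains {n k : ℕ} (π : Equiv.Perm (Fin n)) (σ : Equiv.Perm (Fin k)) : Prop :=
  ∃ f : Fin k → Fin n, StrictMono f ∧ ∀ i j : Fin k, σ i < σ j ↔ π (f i) < π (f j)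

def IsInvolution {n : ℕ} (π : Equiv.Perm (Fin n)) : Prop := π⁻¹ = π

/-- direct sum of permutations -/
def directSum {m n : ℕ} (σ : Equiv.Perm (Fin m)) (τ : Equiv.Perm (Fin n)) :
    Equiv.Perm (Fin (m + n)) :=
  finSumFinEquiv.symm.trans ((Equiv.sumCongr σ τ).trans finSumFinEquiv)

/-- skew sum of permutations -/
def skewSum {m n : ℕ} (σ : Equiv.Perm (Fin m)) (τ : Equiv.Perm (Fin n)) :
    Equiv.Perm (Fin (m + n)) :=
  finSumFinEquiv.symm.trans ((Equiv.sumCongr σ τ).trans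
    ((Equiv.sumComm (Fin m) (Fin n)).trans (finSumFinEquiv.trans (finCongr (Nat.add_comm n m)))))

def SumDecomposable {n : ℕ} (π : Equiv.Perm (Fin n)) : Prop :=
  ∃ (a b : ℕ) (h : a + b = n), 0 < a ∧ 0 < b ∧
    ∃ (σ : Equiv.Perm (Fin a)) (τ : Equiv.Perm (Fin b)),
      π = (finCongr h).permCongr (directSum σ τ)

def SkewDecomposable {n : ℕ} (π : Equiv.Perm (Fin n)) : Prop :=
  ∃ (a b : ℕ) (h : a + b = n), 0 < a ∧ 0 < b ∧
    ∃ (σ : Equiv.Perm (Fin a)) (τ : Equiv.Perm (Fin b)),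
      π = (finCongr h).permCongr (skewSum σ τ)

/-- a set of contiguous indices/values -/
def SetContiguous {n : ℕ} (S : Set (Fin n)) : Prop :=
  ∀ ⦃i j k : Fin n⦄, i ∈ S → j ∈ S → i ≤ k → k ≤ j → k ∈ S

/-- an interval of the permutation `π` -/
def IsPermInterval {n : ℕ} (π : Equiv.Perm (Fin n)) (S : Set (Fin n)) : Prop :=
  SetContiguous S ∧ SetContiguous (π '' S)

/-- A permutation of length at least 2 is simple if all its intervals are trivial. -/
def IsSimple {n : ℕ} (π : Equiv.Perm (Fin n)) : Prop :=
  2 ≤ n ∧ ∀ S : Set (Fin n), IsPermInterval π S → S.ncard ≤ 1 ∨ S = Set.univ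

-- patterns (0-indexed one-line notation)
noncomputable def p123 : Equiv.Perm (Fin 3) := Equiv.ofBijective ![0, 1, 2] (by decide)
noncomputable def p132 : Equiv.Perm (Fin 3) := Equiv.ofBijective ![0, 2, 1] (by decide)
noncomputable def p213 : Equiv.Perm (Fin 3) := Equiv.ofBijective ![1, 0, 2] (by decide)
noncomputable def p1324 : Equiv.Perm (Fin 4) := Equiv.ofBijective ![0, 2, 1, 3] (by decide)
noncomputable def p1234 : Equiv.Perm (Fin 4) := Equiv.ofBijective ![0, 1, 2, 3] (by decide)
noncomputable def p1342 : Equiv.Perm (Fin 4) := Equiv.ofBijective ![0, 2, 3, 1] (by decide)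
noncomputable def p1423 : Equiv.Perm (Fin 4) := Equiv.ofBijective ![0, 3, 1, 2] (by decide)
noncomputable def p2341 : Equiv.Perm (Fin 4) := Equiv.ofBijective ![1, 2, 3, 0] (by decide)
noncomputable def p2413 : Equiv.Perm (Fin 4) := Equiv.ofBijective ![1, 3, 0, 2] (by decide)
noncomputable def p5274163 : Equiv.Perm (Fin 7) := Equiv.ofBijective ![4, 1, 6, 3, 0, 5, 2] (by decide)

-- the order-respecting equivalence between a lexicographic sigma of Fins and a Fin
noncomputable def finSigmaOrderEquiv {m : ℕ} (k : Fin m → ℕ) :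
    (Σₗ i : Fin m, Fin (k i)) ≃o Fin (∑ i, k i) :=
  (monoEquivOfFin (Σₗ i : Fin m, Fin (k i)) (by
    rw [Fintype.card_congr (ofLex : _ ≃ (Σ i : Fin m, Fin (k i)))]
    simp)).symm

/-- the inflation `σ[α 0, …, α (m-1)]` -/
noncomputable def inflation {m : ℕ} (σ : Equiv.Perm (Fin m)) (k : Fin m → ℕ)
    (α : ∀ i, Equiv.Perm (Fin (k i))) : Equiv.Perm (Fin (∑ i, k i)) :=
  ((finSigmaOrderEquiv k).toEquiv.symm.trans
    ((ofLex : (Σₗ i : Fin m, Fin (k i)) ≃ (Σ i : Fin m, Fin (k i))).trans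
      ((Equiv.sigmaCongr σ fun i =>
          (α i).trans (finCongr (congrArg k (σ.symm_apply_apply i).symm))).trans
        ((toLex : (Σ t : Fin m, Fin (k (σ.symm t))) ≃ (Σₗ t : Fin m, Fin (k (σ.symm t)))).trans
          ((finSigmaOrderEquiv fun t => k (σ.symm t)).toEquiv.trans
            (finCongr (Equiv.sum_comp σ.symm k)))))))

/-- The word `w` over the alphabet `{a,b,c,d} = {0,1,2,3}` has no factor `cb`, i.e. no
letter `c = 2` immediately followed by the letter `b = 1`. -/
def NoCBFactor {n : ℕ} (w : Fin n → Fin 4) : Prop :=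
  ∀ (i : ℕ) (h : i + 1 < n), ¬ (w ⟨i, Nat.lt_of_succ_lt h⟩ = 2 ∧ w ⟨i + 1, h⟩ = 1)

/-- Number of pairs `(e, v)` of words of length `n` over `{a,b,c,d} = {0,1,2,3}`, neither
containing the factor `cb`, with the letter `a = 0` occurring in the same positions in `e`
and `v`, and likewise for the letter `d = 3`. -/
noncomputable def pairCount (n : ℕ) : ℕ :=
  Nat.card {ev : (Fin n → Fin 4) × (Fin n → Fin 4) //
    NoCBFactor ev.1 ∧ NoCBFactor ev.2 ∧ (∀ i, ev.1 i = 0 ↔ ev.2 i = 0) ∧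
      (∀ i, ev.1 i = 3 ↔ ev.2 i = 3)}

open Finset

abbrev PP := Fin 4 × Fin 4
def LL (p : PP) : Prop := (p.1 = 0 ↔ p.2 = 0) ∧ (p.1 = 3 ↔ p.2 = 3)
def TT (p q : PP) : Prop := ¬(p.1 = 2 ∧ q.1 = 1) ∧ ¬(p.2 = 2 ∧ q.2 = 1)
instance : DecidablePred LL := fun _ => by unfold LL; infer_instance
instance (p : PP) : DecidablePred (TT p) := fun _ => by unfold TT; infer_instance

def GoodW {n : ℕ} (w : Fin n → PP) : Prop :=
  (∀ i, LL (w i)) ∧ ∀ (i : ℕ) (h : i + 1 < n), TT (w ⟨i, Nat.lt_of_succ_lt h⟩) (w ⟨i+1, h⟩)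

instance {n : ℕ} : DecidablePred (GoodW (n := n)) := fun w =>
  decidable_of_iff ((∀ i, LL (w i)) ∧
      ∀ i : Fin n, ∀ j : Fin n, (j : ℕ) = (i : ℕ) + 1 → TT (w i) (w j)) (by
    constructor
    · rintro ⟨h1, h2⟩
      refine ⟨h1, fun i h => ?_⟩
      exact h2 ⟨i, Nat.lt_of_succ_lt h⟩ ⟨i + 1, h⟩ rfl
    · rintro ⟨h1, h2⟩
      refine ⟨h1, fun i j hj => ?_⟩
      have hi : (i : ℕ) + 1 < n := by rw [← hj]; exact j.isLt
      have key := h2 (i : ℕ) hi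
      have e1 : i = ⟨(i : ℕ), Nat.lt_of_succ_lt hi⟩ := Fin.ext rfl
      have e2 : j = ⟨(i : ℕ) + 1, hi⟩ := Fin.ext hj
      rw [e1, e2]; exact key)

def NN (n : ℕ) (ℓ : PP) : ℕ :=
  Fintype.card {w : Fin (n+1) → PP // GoodW w ∧ w (Fin.last n) = ℓ}

def vv : ℕ → PP → ℕ
  | 0, ℓ => if LL ℓ then 1 else 0
  | n+1, ℓ => if LL ℓ then ∑ ℓ' : PP, if TT ℓ' ℓ then vv n ℓ' else 0 else 0

lemma card_fiber {α β : Type*} [Fintype α] [Fintype β] [DecidableEq β] (f : α → β) :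
    Fintype.card α = ∑ b : β, Fintype.card {a // f a = b} := by
  rw [← Fintype.card_sigma]
  exact Fintype.card_congr (Equiv.sigmaFiberEquiv f).symm

lemma goodW_succ_iff {n : ℕ} (w : Fin (n+1+1) → PP) :
    GoodW w ↔ GoodW (Fin.init w) ∧ LL (w (Fin.last (n+1))) ∧
      TT (w ((Fin.last n).castSucc)) (w (Fin.last (n+1))) := by
  constructor
  · rintro ⟨hL, hT⟩
    refine ⟨⟨fun i => hL _, fun i h => ?_⟩, hL _, ?_⟩
    · exact hT i (Nat.lt_succ_of_lt h)
    · exact hT n (Nat.succ_lt_succ n.lt_succ_self)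
  · rintro ⟨⟨hL, hT⟩, hLa, hTa⟩
    refine ⟨fun i => ?_, fun i h => ?_⟩
    · refine Fin.lastCases ?_ (fun j => ?_) i
      · exact hLa
      · exact hL j
    · rcases Nat.lt_or_ge (i+1) (n+1) with h' | h'
      · exact hT i h'
      · have hi : i = n := by omega
        subst hi
        exact hTa

def snocEquiv (n : ℕ) (ℓ ℓ' : PP) (hL : LL ℓ) (hT : TT ℓ' ℓ) :
    {w : Fin (n+1+1) → PP // (GoodW w ∧ w (Fin.last (n+1)) = ℓ) ∧
        w ((Fin.last n).castSucc) = ℓ'} ≃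
      {w' : Fin (n+1) → PP // GoodW w' ∧ w' (Fin.last n) = ℓ'} where
  toFun w := ⟨Fin.init w.1, ((goodW_succ_iff w.1).1 w.2.1.1).1, w.2.2⟩
  invFun w' := ⟨Fin.snoc w'.1 ℓ, by
    refine ⟨⟨?_, by simp⟩, ?_⟩
    · rw [goodW_succ_iff]
      refine ⟨by rw [Fin.init_snoc]; exact w'.2.1, by simp [hL], ?_⟩
      rw [Fin.snoc_castSucc, Fin.snoc_last, w'.2.2]
      exact hT
    · rw [Fin.snoc_castSucc]; exact w'.2.2⟩
  left_inv w := by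
    apply Subtype.ext
    have := w.2.1.2
    simp only [← this, Fin.snoc_init_self]
  right_inv w' := by
    apply Subtype.ext
    simp [Fin.init_snoc]

lemma NN_succ (n : ℕ) (ℓ : PP) :
    NN (n+1) ℓ = if LL ℓ then ∑ ℓ' : PP, (if TT ℓ' ℓ then NN n ℓ' else 0) else 0 := by
  by_cases hL : LL ℓ
  · rw [if_pos hL]
    have h1 : NN (n+1) ℓ = ∑ ℓ' : PP,
        Fintype.card {w : Fin (n+1+1) → PP // (GoodW w ∧ w (Fin.last (n+1)) = ℓ) ∧
          w ((Fin.last n).castSucc) = ℓ'} := by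
      rw [NN, card_fiber (fun a : {w : Fin (n+1+1) → PP //
        GoodW w ∧ w (Fin.last (n+1)) = ℓ} => a.1 ((Fin.last n).castSucc))]
      refine Finset.sum_congr rfl fun ℓ' _ => ?_
      exact Fintype.card_congr (Equiv.subtypeSubtypeEquivSubtypeInter
        (fun w : Fin (n+1+1) → PP => GoodW w ∧ w (Fin.last (n+1)) = ℓ)
        (fun w => w ((Fin.last n).castSucc) = ℓ'))
    rw [h1]
    refine Finset.sum_congr rfl fun ℓ' _ => ?_
    by_cases hT : TT ℓ' ℓ
    · rw [if_pos hT]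
      exact Fintype.card_congr (snocEquiv n ℓ ℓ' hL hT)
    · rw [if_neg hT, Fintype.card_eq_zero_iff]
      refine ⟨fun w => hT ?_⟩
      obtain ⟨f, ⟨hg, hlast⟩, hsec⟩ := w
      have h2 := ((goodW_succ_iff f).1 hg).2.2
      rwa [hlast, hsec] at h2
  · rw [if_neg hL, NN, Fintype.card_eq_zero_iff]
    refine ⟨fun w => hL ?_⟩
    obtain ⟨f, hg, hlast⟩ := w
    have := hg.1 (Fin.last (n+1))
    rwa [hlast] at this

lemma NN_zero : ∀ ℓ : PP, NN 0 ℓ = vv 0 ℓ := by decide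

lemma NN_eq_vv : ∀ n ℓ, NN n ℓ = vv n ℓ
  | 0, ℓ => NN_zero ℓ
  | n+1, ℓ => by
    rw [NN_succ, vv]
    simp only [NN_eq_vv n]

lemma vv_not (n : ℕ) (ℓ : PP) (h : ¬ LL ℓ) : vv n ℓ = 0 := by
  cases n <;> simp [vv, h]

def c1 (ℓ' : PP) : ℕ := ∑ ℓ : PP, if LL ℓ ∧ TT ℓ' ℓ then 1 else 0
def c2 (ℓ' : PP) : ℕ := ∑ ℓ : PP, if LL ℓ ∧ TT ℓ' ℓ then c1 ℓ else 0
def c3 (ℓ' : PP) : ℕ := ∑ ℓ : PP, if LL ℓ ∧ TT ℓ' ℓ then c2 ℓ else 0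

lemma keyC : ∀ ℓ : PP, LL ℓ → c3 ℓ + c1 ℓ = 5 * c2 ℓ + 1 := by decide

lemma wsum (c : PP → ℕ) (n : ℕ) : ∑ ℓ : PP, c ℓ * vv (n+1) ℓ
    = ∑ ℓ' : PP, (∑ ℓ : PP, if LL ℓ ∧ TT ℓ' ℓ then c ℓ else 0) * vv n ℓ' := by
  have h : ∀ ℓ : PP, c ℓ * vv (n+1) ℓ
      = ∑ ℓ' : PP, (if LL ℓ ∧ TT ℓ' ℓ then c ℓ else 0) * vv n ℓ' := by
    intro ℓ
    by_cases h : LL ℓ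
    · rw [vv, if_pos h, Finset.mul_sum]
      refine Finset.sum_congr rfl fun ℓ' _ => ?_
      by_cases ht : TT ℓ' ℓ
      · rw [if_pos ht, if_pos ⟨h, ht⟩]
      · rw [if_neg ht, if_neg (fun hc => ht hc.2), mul_zero, zero_mul]
    · rw [vv_not _ _ h, mul_zero]
      symm
      refine Finset.sum_eq_zero fun ℓ' _ => ?_
      rw [if_neg (fun hc => h hc.1), zero_mul]
  rw [Finset.sum_congr rfl fun ℓ _ => h ℓ, Finset.sum_comm]
  exact Finset.sum_congr rfl fun ℓ' _ => (Finset.sum_mul _ _ _).symm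

def SS (n : ℕ) : ℕ := ∑ ℓ : PP, vv n ℓ

lemma SS1 (n : ℕ) : SS (n+1) = ∑ ℓ' : PP, c1 ℓ' * vv n ℓ' := by
  have := wsum (fun _ => 1) n
  simpa [SS, c1] using this

lemma SS2 (n : ℕ) : SS (n+2) = ∑ ℓ' : PP, c2 ℓ' * vv n ℓ' := by
  rw [show n+2 = (n+1)+1 from rfl, SS1, wsum c1 n]; rfl

lemma SS3 (n : ℕ) : SS (n+3) = ∑ ℓ' : PP, c3 ℓ' * vv n ℓ' := by
  rw [show n+3 = (n+1)+2 from rfl, SS2, wsum c2 n]; rfl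

lemma SS0 (n : ℕ) : SS n = ∑ ℓ' : PP, (if LL ℓ' then 1 else 0) * vv n ℓ' := by
  refine Finset.sum_congr rfl fun ℓ' _ => ?_
  by_cases h : LL ℓ'
  · rw [if_pos h, one_mul]
  · rw [if_neg h, zero_mul, vv_not _ _ h]

lemma Srec (n : ℕ) : SS (n+3) + SS (n+1) = 5 * SS (n+2) + SS n := by
  rw [SS3, SS1, SS2, SS0 n, Finset.mul_sum, ← Finset.sum_add_distrib, ← Finset.sum_add_distrib]
  refine Finset.sum_congr rfl fun ℓ' _ => ?_
  by_cases h : LL ℓ'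
  · rw [if_pos h, ← add_mul, keyC ℓ' h, add_mul, mul_assoc, one_mul]
  · simp [vv_not _ _ h]

def pairEquiv (n : ℕ) :
    {ev : (Fin n → Fin 4) × (Fin n → Fin 4) //
      NoCBFactor ev.1 ∧ NoCBFactor ev.2 ∧ (∀ i, ev.1 i = 0 ↔ ev.2 i = 0) ∧
        (∀ i, ev.1 i = 3 ↔ ev.2 i = 3)} ≃ {w : Fin n → PP // GoodW w} where
  toFun ev := ⟨fun i => (ev.1.1 i, ev.1.2 i),
    fun i => ⟨ev.2.2.2.1 i, ev.2.2.2.2 i⟩,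
    fun i h => ⟨ev.2.1 i h, ev.2.2.1 i h⟩⟩
  invFun w := ⟨(fun i => (w.1 i).1, fun i => (w.1 i).2),
    fun i h hc => (w.2.2 i h).1 hc,
    fun i h hc => (w.2.2 i h).2 hc,
    fun i => (w.2.1 i).1,
    fun i => (w.2.1 i).2⟩
  left_inv ev := rfl
  right_inv w := rfl

lemma pairCount_eq (n : ℕ) : pairCount n = Fintype.card {w : Fin n → PP // GoodW w} := by
  rw [pairCount, ← Nat.card_eq_fintype_card]
  exact Nat.card_congr (pairEquiv n)

lemma pairCount_zero : pairCount 0 = 1 := by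
  rw [pairCount_eq]; decide

lemma pairCount_succ (n : ℕ) : pairCount (n+1) = SS n := by
  rw [pairCount_eq,
    card_fiber (fun a : {w : Fin (n+1) → PP // GoodW w} => a.1 (Fin.last n)), SS]
  refine Finset.sum_congr rfl fun ℓ _ => ?_
  rw [← NN_eq_vv, NN]
  exact Fintype.card_congr (Equiv.subtypeSubtypeEquivSubtypeInter GoodW
    (fun w => w (Fin.last n) = ℓ))

lemma SS_vals : SS 0 = 6 ∧ SS 1 = 29 ∧ SS 2 = 140 := by decide


/-- `∑ pₙ xⁿ = (1 + x)/(1 - 5x + x² - x³)`. -/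
theorem pairCount_gf :
    (PowerSeries.mk fun n => (pairCount n : ℚ)) *
        (1 - 5 * PowerSeries.X + PowerSeries.X ^ 2 - PowerSeries.X ^ 3) =
      1 + PowerSeries.X := by
  have h0 : pairCount 0 = 1 := pairCount_zero
  have h1 : pairCount 1 = 6 := by rw [pairCount_succ]; exact SS_vals.1
  have h2 : pairCount 2 = 29 := by rw [pairCount_succ]; exact SS_vals.2.1
  have h3 : pairCount 3 = 140 := by rw [pairCount_succ]; exact SS_vals.2.2
  have hrec : ∀ m : ℕ, (pairCount (m+3) : ℚ) - 5*(pairCount (m+2) : ℚ)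
      + (pairCount (m+1) : ℚ) - (pairCount m : ℚ) = 0 := by
    intro m
    match m with
    | 0 => rw [h0, h1, h2, h3]; norm_num
    | k+1 =>
      rw [show k+1+3 = (k+3)+1 from rfl, show k+1+2 = (k+2)+1 from rfl,
        show k+1+1 = (k+1)+1 from rfl, pairCount_succ, pairCount_succ,
        pairCount_succ, pairCount_succ]
      have h := congrArg (fun x : ℕ => (x : ℚ)) (Srec k)
      push_cast at h
      linarith
  set f : PowerSeries ℚ := PowerSeries.mk fun n => (pairCount n : ℚ) with hf
  have hexp : f * (1 - 5 * PowerSeries.X + PowerSeries.X ^ 2 - PowerSeries.X ^ 3)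
      = f - (PowerSeries.C (R := ℚ) 5) * (f * PowerSeries.X ^ 1)
        + f * PowerSeries.X ^ 2 - f * PowerSeries.X ^ 3 := by
    have hC : (5 : PowerSeries ℚ) = PowerSeries.C (R := ℚ) 5 := by
      exact (map_ofNat (PowerSeries.C (R := ℚ)) 5).symm
    rw [hC]; ring
  rw [hexp]
  ext n
  simp only [map_sub, map_add, PowerSeries.coeff_C_mul, PowerSeries.coeff_mul_X_pow',
    PowerSeries.coeff_mk, PowerSeries.coeff_one, PowerSeries.coeff_X, hf]
  match n with
  | 0 => norm_num [h0]
  | 1 => norm_num [h0, h1]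
  | 2 => norm_num [h0, h1, h2]
  | m+3 =>
    have c1 : 1 ≤ m+3 := by omega
    have c2 : 2 ≤ m+3 := by omega
    have c3 : 3 ≤ m+3 := by omega
    rw [if_pos c1, if_pos c2, if_pos c3,
      show m+3-1 = m+2 from rfl, show m+3-2 = m+1 from rfl, show m+3-3 = m from rfl,
      if_neg (by omega : ¬ m+3 = 0), if_neg (by omega : ¬ m+3 = 1)]
    simpa using hrec m
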